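/- arXiv:1410.6457 — 2 statements merged into one kernel-verified Lean document; each statement's English description precedes it below -/
import Mathlib

section
/- Let p ≡ 1 (mod 4) be a prime, let χ be the Legendre symbol mod p, and suppose 0 < α and 0 < β < 2 are such that |∑_{a∈S, b∈S} χ(a−b)| < |S|^{2−β} for every subset S ⊆ F_p with |S| > p^α. Then for every real τ ≥ 2α/(2−β) and every pair of disjoint subsets I, J ⊆ F_p with |J| ≤ |I| ≤ p^{2τ/(2−β)}, one has |∑_{i∈I, j∈J} χ(i−j)| ≤ p^τ · √(3·|I|·|J|). -/
open scoped BigOperators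

theorem paley_discrepancy_flat_bound (p : ℕ) [Fact (Nat.Prime p)] (hp4 : p % 4 = 1)
    (α β : ℝ) (hα : 0 < α) (hβ0 : 0 < β) (hβ2 : β < 2)
    (hdisc : ∀ S : Finset (ZMod p), (p : ℝ) ^ α < (S.card : ℝ) →
      |∑ a ∈ S, ∑ b ∈ S, ((quadraticChar (ZMod p) (a - b) : ℤ) : ℝ)| <
        (S.card : ℝ) ^ (2 - β))
    (τ : ℝ) (hτ : 2 * α / (2 - β) ≤ τ)
    (I J : Finset (ZMod p)) (hIJ : Disjoint I J) (hJI : J.card ≤ I.card)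
    (hI : (I.card : ℝ) ≤ (p : ℝ) ^ (2 * τ / (2 - β))) :
    |∑ i ∈ I, ∑ j ∈ J, ((quadraticChar (ZMod p) (i - j) : ℤ) : ℝ)| ≤
      (p : ℝ) ^ τ * Real.sqrt (3 * I.card * J.card) := by
  have hp : (1 : ℝ) < p := by
    exact_mod_cast (Fact.out : Nat.Prime p).one_lt
  have hppos : (0 : ℝ) < p := by linarith
  have hβ : (0 : ℝ) < 2 - β := by linarith
  have hτpos : 0 < τ := lt_of_lt_of_le (by positivity) hτ
  set q : ZMod p → ℝ := fun x => ((quadraticChar (ZMod p) x : ℤ) : ℝ) with hq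
  -- |q x| ≤ 1
  have habs : ∀ x : ZMod p, |q x| ≤ 1 := by
    intro x
    rcases quadraticChar_isQuadratic (ZMod p) x with h | h | h <;>
      simp only [hq] <;> rw [h] <;> norm_num
  -- evenness
  have hp2 : p ≠ 2 := by intro h; rw [h] at hp4; norm_num at hp4
  have hsqm1 : IsSquare (-1 : ZMod p) := by
    rw [ZMod.exists_sq_eq_neg_one_iff]; omega
  have hne : (-1 : ZMod p) ≠ 0 := by
    have : (1 : ZMod p) ≠ 0 := one_ne_zero
    simpa using this
  have hχm1 : quadraticChar (ZMod p) (-1) = 1 :=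
    (quadraticChar_one_iff_isSquare hne).mpr hsqm1
  have heven : ∀ x : ZMod p, q (-x) = q x := by
    intro x
    have : quadraticChar (ZMod p) (-x) = quadraticChar (ZMod p) x := by
      rw [show -x = -1 * x by ring, map_mul, hχm1, one_mul]
    simp only [hq]
    rw [this]
  -- trivial bound
  have htriv : ∀ A B : Finset (ZMod p),
      |∑ a ∈ A, ∑ b ∈ B, q (a - b)| ≤ (A.card : ℝ) * B.card := by
    intro A B
    calc |∑ a ∈ A, ∑ b ∈ B, q (a - b)| ≤ ∑ a ∈ A, |∑ b ∈ B, q (a - b)| :=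
          Finset.abs_sum_le_sum_abs _ _
      _ ≤ ∑ a ∈ A, (B.card : ℝ) := by
          refine Finset.sum_le_sum fun a _ => ?_
          calc |∑ b ∈ B, q (a - b)| ≤ ∑ b ∈ B, |q (a - b)| :=
                Finset.abs_sum_le_sum_abs _ _
            _ ≤ ∑ b ∈ B, (1 : ℝ) := Finset.sum_le_sum fun b _ => habs _
            _ = (B.card : ℝ) := by simp
      _ = (A.card : ℝ) * B.card := by simp [mul_comm]
  -- p^(2α) ≤ p^(2τ)
  have hexp : 2 * α ≤ 2 * τ := by
    have h1 : 2 * α ≤ τ * (2 - β) := by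
      rw [div_le_iff₀ hβ] at hτ; linarith
    nlinarith
  have hPα : (p : ℝ) ^ (2 * α) ≤ (p : ℝ) ^ (2 * τ) :=
    Real.rpow_le_rpow_of_exponent_le (le_of_lt hp) hexp
  -- main diagonal bound
  have hA : ∀ (S : Finset (ZMod p)) (x C : ℝ), (S.card : ℝ) ≤ x →
      (p : ℝ) ^ (2 * α) ≤ C → x ^ (2 - β) ≤ C →
      |∑ a ∈ S, ∑ b ∈ S, q (a - b)| ≤ C := by
    intro S x C hSx h1 h2
    rcases le_or_gt ((S.card : ℝ)) ((p : ℝ) ^ α) with h | h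
    · refine (htriv S S).trans (le_trans ?_ h1)
      have := mul_le_mul h h (Nat.cast_nonneg _) (Real.rpow_nonneg hppos.le α)
      calc (S.card : ℝ) * S.card ≤ (p : ℝ) ^ α * (p : ℝ) ^ α := this
        _ = (p : ℝ) ^ (2 * α) := by rw [← Real.rpow_add hppos]; ring_nf
    · refine le_of_lt (hdisc S h) |>.trans ?_
      exact (Real.rpow_le_rpow (Nat.cast_nonneg _) hSx hβ.le).trans h2
  set P : ℝ := (p : ℝ) ^ (2 * τ) with hP
  have hPpos : 0 < P := Real.rpow_pos_of_pos hppos _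
  set x : ℝ := (p : ℝ) ^ (2 * τ / (2 - β)) with hx
  have hxpos : 0 < x := Real.rpow_pos_of_pos hppos _
  have hxP : x ^ (2 - β) = P := by
    rw [hx, hP, ← Real.rpow_mul hppos.le]
    congr 1
    field_simp
  -- bounds for the three diagonal sums
  have hII : |∑ a ∈ I, ∑ b ∈ I, q (a - b)| ≤ P :=
    hA I x P hI hPα hxP.le
  have hJJ : |∑ a ∈ J, ∑ b ∈ J, q (a - b)| ≤ P := by
    refine hA J x P ?_ hPα hxP.le
    exact le_trans (by exact_mod_cast hJI) hI
  have hUU : |∑ a ∈ I ∪ J, ∑ b ∈ I ∪ J, q (a - b)| ≤ 4 * P := by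
    refine hA (I ∪ J) (2 * x) (4 * P) ?_ (by linarith) ?_
    · calc ((I ∪ J).card : ℝ) ≤ (I.card : ℝ) + J.card := by
            exact_mod_cast Finset.card_union_le I J
        _ ≤ x + x := add_le_add hI (le_trans (by exact_mod_cast hJI) hI)
        _ = 2 * x := by ring
    · calc (2 * x) ^ (2 - β) = 2 ^ (2 - β) * x ^ (2 - β) :=
            Real.mul_rpow (by norm_num) hxpos.le
        _ ≤ 2 ^ (2 : ℝ) * P := by
            rw [hxP]
            exact mul_le_mul_of_nonneg_right
              (Real.rpow_le_rpow_of_exponent_le (by norm_num) (by linarith)) hPpos.le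
        _ = 4 * P := by norm_num
  -- decomposition
  have hswap : ∑ a ∈ J, ∑ b ∈ I, q (a - b) = ∑ i ∈ I, ∑ j ∈ J, q (i - j) := by
    rw [Finset.sum_comm]
    refine Finset.sum_congr rfl fun i _ => Finset.sum_congr rfl fun j _ => ?_
    rw [show j - i = -(i - j) by ring, heven]
  have hsplit : ∑ a ∈ I ∪ J, ∑ b ∈ I ∪ J, q (a - b) =
      (∑ a ∈ I, ∑ b ∈ I, q (a - b)) + (∑ a ∈ J, ∑ b ∈ J, q (a - b)) +
      2 * ∑ i ∈ I, ∑ j ∈ J, q (i - j) := by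
    rw [Finset.sum_union hIJ]
    simp only [Finset.sum_add_distrib, Finset.sum_union hIJ]
    rw [hswap]
    ring
  set D : ℝ := ∑ i ∈ I, ∑ j ∈ J, q (i - j) with hD
  have hmain : |D| ≤ 3 * P := by
    have h1 : 2 * D = (∑ a ∈ I ∪ J, ∑ b ∈ I ∪ J, q (a - b)) -
        (∑ a ∈ I, ∑ b ∈ I, q (a - b)) - (∑ a ∈ J, ∑ b ∈ J, q (a - b)) := by
      rw [hsplit]; ring
    have h2 : |2 * D| ≤ 6 * P := by
      rw [h1]
      calc |_ - _ - _| ≤ |∑ a ∈ I ∪ J, ∑ b ∈ I ∪ J, q (a - b)| +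
            |∑ a ∈ I, ∑ b ∈ I, q (a - b)| + |∑ a ∈ J, ∑ b ∈ J, q (a - b)| := by
            exact (abs_sub _ _).trans (add_le_add (abs_sub _ _) le_rfl) |>.trans
              (by exact le_refl _)
        _ ≤ 4 * P + P + P := by gcongr
        _ = 6 * P := by ring
    rw [abs_mul] at h2
    simp only [abs_two] at h2
    linarith
  have htrivD : |D| ≤ (I.card : ℝ) * J.card := htriv I J
  -- conclude
  have hrhs : (p : ℝ) ^ τ * Real.sqrt (3 * I.card * J.card) =
      Real.sqrt (((p : ℝ) ^ τ) ^ 2 * (3 * I.card * J.card)) := by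
    rw [Real.sqrt_mul (sq_nonneg _), Real.sqrt_sq (Real.rpow_nonneg hppos.le _)]
  rw [hrhs]
  rw [Real.le_sqrt (abs_nonneg _) (by positivity)]
  have hPsq : ((p : ℝ) ^ τ) ^ 2 = P := by
    rw [hP, ← Real.rpow_natCast ((p:ℝ)^τ), ← Real.rpow_mul hppos.le]
    norm_num [mul_comm]
  rw [hPsq]
  have : |D| ^ 2 ≤ ((I.card : ℝ) * J.card) * (3 * P) :=
    by nlinarith [abs_nonneg D]
  calc |D| ^ 2 ≤ ((I.card : ℝ) * J.card) * (3 * P) := this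
    _ = P * (3 * I.card * J.card) := by ring
end

section
/- Suppose there exist real numbers γ > 1/2 and τ < 1/2 such that for every ε > 0 and every sufficiently large prime p ≡ 1 (mod 4), the Paley matrix Φ of p satisfies the (⌊p^γ⌋, p^{τ−1/2+ε})-restricted isometry property. Then for every ε > 0 and every sufficiently large prime p ≡ 1 (mod 4), every clique in the Paley graph on F_p has at most p^{τ+ε} vertices. -/
open scoped BigOperators

/-- The Paley matrix: rows are indexed by the set `Q` of squares in `F_p`, columns
by `F_p` together with one extra index `∗` (here `none`). -/
noncomputable def paleyMatrix (p : ℕ) [Fact (Nat.Prime p)] :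
    Matrix {x : ZMod p // IsSquare x} (Option (ZMod p)) ℂ := fun q j =>
  match j with
  | some j =>
      (if (q : ZMod p) = 0 then (1 : ℂ) / Real.sqrt p else (Real.sqrt (2 / p) : ℂ)) *
        Complex.exp (-(2 * Real.pi * Complex.I) * (((q : ZMod p) * j).val : ℕ) / p)
  | none => if (q : ZMod p) = 0 then 1 else 0

/-- `Φ` satisfies the `(K, δ)`-restricted isometry property: for every real vector
`x` with at most `K` nonzero entries, `(1−δ)‖x‖² ≤ ‖Φx‖² ≤ (1+δ)‖x‖²`. -/
def RIP {m n : Type*} [Fintype m] [Fintype n] (Φ : Matrix m n ℂ)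
    (K : ℕ) (δ : ℝ) : Prop :=
  ∀ x : n → ℝ, (Finset.univ.filter fun i => x i ≠ 0).card ≤ K →
    (1 - δ) * (∑ i, x i ^ 2) ≤ ∑ r, ‖∑ i, Φ r i * (x i : ℂ)‖ ^ 2 ∧
    ∑ r, ‖∑ i, Φ r i * (x i : ℂ)‖ ^ 2 ≤ (1 + δ) * (∑ i, x i ^ 2)

/-- `S` is a clique in the Paley graph on `F_p`: any two distinct elements `x, y` of
`S` are adjacent, i.e. `χ(x − y) = 1` where `χ` is the Legendre symbol. -/
def IsPaleyClique (p : ℕ) [Fact (Nat.Prime p)] (S : Finset (ZMod p)) : Prop :=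
  ∀ x ∈ S, ∀ y ∈ S, x ≠ y → quadraticChar (ZMod p) (x - y) = 1

/-! ### Auxiliary definitions -/

/-- The quadratic character of `ZMod p`, valued in `ℂ`. -/
noncomputable def qcC (p : ℕ) [Fact (Nat.Prime p)] : MulChar (ZMod p) ℂ :=
  (quadraticChar (ZMod p)).ringHomComp (Int.castRingHom ℂ)

/-- The complex quadratic Gauss sum of `ZMod p`. -/
noncomputable def gC (p : ℕ) [Fact (Nat.Prime p)] : ℂ :=
  gaussSum (qcC p) (ZMod.stdAddChar)

/-- Row weights of the Paley matrix. -/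
noncomputable def ccP (p : ℕ) [Fact (Nat.Prime p)] (r : {x : ZMod p // IsSquare x}) : ℝ :=
  if (r : ZMod p) = 0 then 1 / Real.sqrt p else Real.sqrt (2 / p)

/-- The real indicator vector of a set `S ⊆ F_p`, extended by `0` at `∗`. -/
noncomputable def indP (p : ℕ) [Fact (Nat.Prime p)] (S : Finset (ZMod p)) :
    Option (ZMod p) → ℝ := fun i => match i with
  | some j => if j ∈ S then 1 else 0
  | none => 0

section Aux

variable {p : ℕ} [Fact (Nat.Prime p)]

lemma qcC_apply (t : ZMod p) : qcC p t = ((quadraticChar (ZMod p) t : ℤ) : ℂ) := rfl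

lemma ringChar_ne_two (hp : p % 4 = 1) : ringChar (ZMod p) ≠ 2 := by
  rw [ZMod.ringChar_zmod_n]; omega

lemma qcC_ne_one (hp : p % 4 = 1) : qcC p ≠ 1 := by
  intro h
  exact quadraticChar_ne_one (ringChar_ne_two hp)
    ((MulChar.ringHomComp_eq_one_iff (f := Int.castRingHom ℂ)
      (by exact_mod_cast Int.cast_injective)).mp h)

lemma qcC_neg_one (hp : p % 4 = 1) : qcC p (-1) = 1 := by
  rw [qcC_apply, (quadraticChar_one_iff_isSquare (by
    intro h
    have h1 : (1 : ZMod p) ≠ 0 := one_ne_zero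
    exact h1 (by rw [← neg_neg (1 : ZMod p), h, neg_zero]))).mpr
    (ZMod.exists_sq_eq_neg_one_iff.mpr (by omega))]
  norm_num

lemma gC_sq (hp : p % 4 = 1) : gC p ^ 2 = p := by
  have hq : (qcC p).IsQuadratic := (quadraticChar_isQuadratic (ZMod p)).comp _
  have h2 : gC p ^ 2 = qcC p (-1) * (Fintype.card (ZMod p) : ℂ) :=
    gaussSum_sq (qcC_ne_one hp) hq (ZMod.isPrimitive_stdAddChar p)
  rw [h2, qcC_neg_one hp, one_mul, ZMod.card]

lemma abs_gC (hp : p % 4 = 1) : ‖gC p‖ = Real.sqrt p := by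
  have h2 : ‖gC p‖ ^ 2 = p := by
    rw [← norm_pow, gC_sq hp, Complex.norm_natCast]
  rw [← Real.sqrt_sq (norm_nonneg _), h2]

lemma conj_std (a : ZMod p) : (starRingEnd ℂ) (ZMod.stdAddChar a) = ZMod.stdAddChar (-a) := by
  have h1 : a = ((a.val : ℤ) : ZMod p) := by simp [ZMod.natCast_val, ZMod.cast_id]
  rw [h1, ← Int.cast_neg, ZMod.stdAddChar_coe, ZMod.stdAddChar_coe, ← Complex.exp_conj]
  congr 1
  simp only [map_div₀, map_mul, Complex.conj_I, Complex.conj_ofReal, map_ofNat,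
    map_intCast, Complex.conj_natCast]
  push_cast
  ring

lemma entry (r : {x : ZMod p // IsSquare x}) (j : ZMod p) :
    paleyMatrix p r (some j) =
      ((ccP p r : ℝ) : ℂ) * ZMod.stdAddChar (-((r : ZMod p) * j)) := by
  have h1 : ((r : ZMod p) * j) = (((((r : ZMod p) * j).val : ℕ) : ℤ) : ZMod p) := by
    simp [ZMod.natCast_val, ZMod.cast_id]
  rw [paleyMatrix, ccP]
  conv_rhs => rw [h1, ← Int.cast_neg, ZMod.stdAddChar_coe]
  congr 1
  · rw [apply_ite Complex.ofReal]
    split <;> push_cast <;> ring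
  · congr 1; push_cast; ring

lemma L1 (f : ZMod p → ℂ) :
    ∑ r : {x : ZMod p // IsSquare x}, (if (r : ZMod p) = 0 then (1:ℂ) else 2) * f r
      = ∑ t : ZMod p, (1 + qcC p t) * f t := by
  classical
  have h : ∀ t : ZMod p, ((1 + quadraticChar (ZMod p) t : ℤ) : ℂ) * f t
      = if ht : IsSquare t then (if t = 0 then (1:ℂ) else 2) * f t else 0 := by
    intro t
    by_cases ht : IsSquare t
    · by_cases h0 : t = 0
      · simp [ht, h0]
      · rw [dif_pos ht, if_neg h0, (quadraticChar_one_iff_isSquare h0).mpr ht]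
        norm_num
    · have h0 : t ≠ 0 := by rintro rfl; exact ht (IsSquare.zero)
      rw [dif_neg ht, quadraticChar_neg_one_iff_not_isSquare.mpr ht]
      norm_num
  calc ∑ r : {x : ZMod p // IsSquare x}, (if (r : ZMod p) = 0 then (1:ℂ) else 2) * f r
      = ∑ r : {x : ZMod p // IsSquare x},
          (if ht : IsSquare (r : ZMod p) then (if (r:ZMod p) = 0 then (1:ℂ) else 2) * f r else 0) := by
        refine Finset.sum_congr rfl fun r _ => ?_
        rw [dif_pos r.2]
    _ = ∑ t : ZMod p, (if ht : IsSquare t then (if t = 0 then (1:ℂ) else 2) * f t else 0) := by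
        rw [← Finset.sum_subtype (Finset.univ.filter (fun t : ZMod p => IsSquare t))
          (by simp) (fun t => if ht : IsSquare t then (if t = 0 then (1:ℂ) else 2) * f t else 0)]
        rw [Finset.sum_filter_of_ne]
        intro t _ h'
        by_contra hc
        exact h' (by rw [dif_neg hc])
    _ = ∑ t : ZMod p, (1 + qcC p t) * f t := by
        refine Finset.sum_congr rfl fun t _ => ?_
        rw [← h t, qcC_apply]
        push_cast
        ring

lemma L2 (hp : p % 4 = 1) (d : ZMod p) (hd : d = 0 ∨ quadraticChar (ZMod p) d = 1) :
    ∑ r : {x : ZMod p // IsSquare x},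
        (if (r : ZMod p) = 0 then (1:ℂ)/p else 2/p) * ZMod.stdAddChar ((r : ZMod p) * d)
      = if d = 0 then 1 else gC p / p := by
  classical
  have hp0 : (p : ℂ) ≠ 0 := by exact_mod_cast (Fact.out : p.Prime).ne_zero
  have key : ∑ r : {x : ZMod p // IsSquare x},
      (if (r : ZMod p) = 0 then (1:ℂ)/p else 2/p) * ZMod.stdAddChar ((r : ZMod p) * d)
      = (∑ t : ZMod p, (1 + qcC p t) * ZMod.stdAddChar (t * d)) / p := by
    rw [← L1 (fun t => ZMod.stdAddChar (t * d)), Finset.sum_div]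
    refine Finset.sum_congr rfl fun r _ => ?_
    split <;> ring
  rw [key]
  have hsum : ∑ t : ZMod p, (1 + qcC p t) * ZMod.stdAddChar (t * d)
      = (∑ t : ZMod p, ZMod.stdAddChar (t * d))
        + ∑ t : ZMod p, qcC p t * ZMod.stdAddChar (t * d) := by
    rw [← Finset.sum_add_distrib]
    exact Finset.sum_congr rfl fun t _ => by ring
  have hmul : ∑ t : ZMod p, qcC p t * ZMod.stdAddChar (t * d)
      = gaussSum (qcC p) ((ZMod.stdAddChar (N := p)).mulShift d) := by
    unfold gaussSum
    refine Finset.sum_congr rfl fun t _ => ?_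
    rw [AddChar.mulShift_apply, mul_comm d t]
  rw [hsum, hmul, AddChar.sum_mulShift d (ZMod.isPrimitive_stdAddChar p)]
  rcases hd with rfl | hd
  · rw [if_pos rfl, if_pos rfl, AddChar.mulShift_zero, ZMod.card]
    have h0 : gaussSum (qcC p) (1 : AddChar (ZMod p) ℂ) = 0 := by
      unfold gaussSum
      simp only [AddChar.one_apply, mul_one]
      exact MulChar.sum_eq_zero_of_ne_one (qcC_ne_one hp)
    rw [h0, add_zero]
    field_simp
  · have hd0 : d ≠ 0 := fun h => by simp [h] at hd
    rw [if_neg hd0, if_neg hd0, Nat.cast_zero, zero_add]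
    have hu : IsUnit d := isUnit_iff_ne_zero.mpr hd0
    have hgs := gaussSum_mulShift (qcC p) (ZMod.stdAddChar (N := p)) hu.unit
    rw [IsUnit.unit_spec] at hgs
    have hqd : qcC p d = 1 := by rw [qcC_apply, hd]; norm_num
    rw [hqd, one_mul] at hgs
    rw [hgs, gC]

lemma ccP_sq (r : {x : ZMod p // IsSquare x}) :
    ((ccP p r : ℝ) : ℂ)^2 = if (r : ZMod p) = 0 then (1:ℂ)/p else 2/p := by
  have hp0 : (0:ℝ) ≤ p := Nat.cast_nonneg p
  rw [ccP]
  split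
  · rw [show (((1 / Real.sqrt p : ℝ)) : ℂ)^2 = (((1 / Real.sqrt p)^2 : ℝ) : ℂ) by push_cast; ring]
    rw [div_pow, one_pow, Real.sq_sqrt hp0]
    push_cast; ring
  · rw [show (((Real.sqrt (2/p) : ℝ)) : ℂ)^2 = (((Real.sqrt (2/p))^2 : ℝ) : ℂ) by push_cast; ring]
    rw [Real.sq_sqrt (by positivity)]
    push_cast; ring

lemma zr (S : Finset (ZMod p)) (r : {x : ZMod p // IsSquare x}) :
    ∑ i : Option (ZMod p), paleyMatrix p r i * ((indP p S i : ℝ) : ℂ)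
      = ((ccP p r : ℝ) : ℂ) * ∑ j ∈ S, ZMod.stdAddChar (-((r : ZMod p) * j)) := by
  rw [Fintype.sum_option]
  simp only [indP, entry, Complex.ofReal_zero, mul_zero, zero_add, apply_ite (Complex.ofReal),
    Complex.ofReal_one, mul_ite, mul_one]
  rw [Finset.sum_ite_mem, Finset.univ_inter, Finset.mul_sum]

lemma L4 (hp : p % 4 = 1) (S : Finset (ZMod p)) (hS : IsPaleyClique p S) :
    ((∑ r : {x : ZMod p // IsSquare x},
        ‖∑ i : Option (ZMod p), paleyMatrix p r i * ((indP p S i : ℝ) : ℂ)‖ ^ 2 : ℝ) : ℂ)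
      = S.card + ((S.card : ℂ)^2 - S.card) * (gC p / p) := by
  rw [Complex.ofReal_sum]
  have step1 : ∀ r : {x : ZMod p // IsSquare x},
      ((‖∑ i : Option (ZMod p), paleyMatrix p r i * ((indP p S i : ℝ) : ℂ)‖ ^ 2 : ℝ) : ℂ)
      = (if (r : ZMod p) = 0 then (1:ℂ)/p else 2/p)
          * ∑ j ∈ S, ∑ k ∈ S, ZMod.stdAddChar ((r : ZMod p) * (k - j)) := by
    intro r
    rw [show ((‖∑ i : Option (ZMod p), paleyMatrix p r i * ((indP p S i : ℝ) : ℂ)‖ ^ 2 : ℝ) : ℂ)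
        = (∑ i : Option (ZMod p), paleyMatrix p r i * ((indP p S i : ℝ) : ℂ))
          * (starRingEnd ℂ) (∑ i : Option (ZMod p), paleyMatrix p r i * ((indP p S i : ℝ) : ℂ)) by
      rw [show (‖∑ i : Option (ZMod p), paleyMatrix p r i * ((indP p S i : ℝ) : ℂ)‖ ^ 2 : ℝ)
          = Complex.normSq (∑ i : Option (ZMod p), paleyMatrix p r i * ((indP p S i : ℝ) : ℂ)) from
        Complex.sq_norm _]
      exact (Complex.mul_conj _).symm]
    rw [zr, map_mul, map_sum, Complex.conj_ofReal]
    simp only [conj_std, neg_neg]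
    rw [show (((ccP p r : ℝ) : ℂ) * ∑ j ∈ S, ZMod.stdAddChar (-((r : ZMod p) * j)))
        * (((ccP p r : ℝ) : ℂ) * ∑ k ∈ S, ZMod.stdAddChar ((r : ZMod p) * k))
        = ((ccP p r : ℝ) : ℂ)^2 * ((∑ j ∈ S, ZMod.stdAddChar (-((r : ZMod p) * j)))
            * ∑ k ∈ S, ZMod.stdAddChar ((r : ZMod p) * k)) by ring]
    rw [ccP_sq, Finset.sum_mul_sum]
    congr 1
    refine Finset.sum_congr rfl fun j _ => Finset.sum_congr rfl fun k _ => ?_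
    rw [← AddChar.map_add_eq_mul]
    congr 1
    ring
  rw [Finset.sum_congr rfl fun r _ => step1 r]
  rw [show ∑ r : {x : ZMod p // IsSquare x}, (if (r : ZMod p) = 0 then (1:ℂ)/p else 2/p)
        * ∑ j ∈ S, ∑ k ∈ S, ZMod.stdAddChar ((r : ZMod p) * (k - j))
      = ∑ j ∈ S, ∑ k ∈ S, ∑ r : {x : ZMod p // IsSquare x},
          (if (r : ZMod p) = 0 then (1:ℂ)/p else 2/p) * ZMod.stdAddChar ((r : ZMod p) * (k - j)) by
    simp only [Finset.mul_sum]
    rw [Finset.sum_comm]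
    refine Finset.sum_congr rfl fun j _ => Finset.sum_comm]
  have inner : ∀ j ∈ S, ∀ k ∈ S, ∑ r : {x : ZMod p // IsSquare x},
      (if (r : ZMod p) = 0 then (1:ℂ)/p else 2/p) * ZMod.stdAddChar ((r : ZMod p) * (k - j))
      = if k = j then 1 else gC p / p := by
    intro j hj k hk
    rw [L2 hp (k - j) ?_]
    · simp only [sub_eq_zero]
    · rcases eq_or_ne k j with h | h
      · exact Or.inl (by rw [h, sub_self])
      · exact Or.inr (hS k hk j hj h)
  rw [Finset.sum_congr rfl fun j hj => Finset.sum_congr rfl fun k hk => inner j hj k hk]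
  have hrow : ∀ j ∈ S, ∑ k ∈ S, (if k = j then (1:ℂ) else gC p / p)
      = S.card * (gC p / p) + (1 - gC p / p) := by
    intro j hj
    rw [Finset.sum_congr rfl (fun k _ => show (if k = j then (1:ℂ) else gC p / p)
      = gC p / p + (if k = j then 1 - gC p / p else 0) by split <;> ring)]
    rw [Finset.sum_add_distrib, Finset.sum_const, Finset.sum_ite_eq' S j (fun _ => 1 - gC p / p),
      if_pos hj, nsmul_eq_mul]
  rw [Finset.sum_congr rfl hrow, Finset.sum_const, nsmul_eq_mul]
  ring

lemma card_filter_indP (S : Finset (ZMod p)) :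
    (Finset.univ.filter fun i => indP p S i ≠ 0).card = S.card := by
  classical
  have h : (Finset.univ.filter fun i => indP p S i ≠ 0) = S.image some := by
    ext i
    cases i with
    | none => simp only [Finset.mem_filter, Finset.mem_univ, true_and]; simp [indP]
    | some j =>
        simp only [Finset.mem_filter, Finset.mem_univ, true_and, Finset.mem_image]; simp only [indP]
        constructor
        · intro h
          by_cases hj : j ∈ S
          · exact ⟨j, hj, rfl⟩
          · simp [hj] at h
        · rintro ⟨a, ha, haj⟩
          obtain rfl : a = j := Option.some_injective _ haj
          simp [ha]
  rw [h, Finset.card_image_of_injective _ (Option.some_injective _)]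

lemma sum_sq_indP (S : Finset (ZMod p)) :
    ∑ i : Option (ZMod p), indP p S i ^ 2 = S.card := by
  classical
  rw [Fintype.sum_option]
  simp only [indP]
  rw [Finset.sum_congr rfl (fun j _ => show (if j ∈ S then (1:ℝ) else 0)^2
    = if j ∈ S then (1:ℝ) else 0 by split <;> norm_num)]
  simp [Finset.sum_ite_mem]

lemma key_clique_bound (hp : p % 4 = 1) {K : ℕ} {δ : ℝ} (hδ : 0 ≤ δ)
    (hrip : RIP (paleyMatrix p) K δ) {S : Finset (ZMod p)} (hS : IsPaleyClique p S)
    (hcard : S.card ≤ K) : (S.card : ℝ) - 1 ≤ δ * Real.sqrt p := by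
  have hppos : (0:ℝ) < p := by
    have := (Fact.out : p.Prime).pos; exact_mod_cast this
  have hsqrt : (0:ℝ) < Real.sqrt p := Real.sqrt_pos.mpr hppos
  rcases Nat.eq_zero_or_pos S.card with h0 | hpos
  · rw [h0]
    have := mul_nonneg hδ hsqrt.le
    norm_num; linarith
  obtain ⟨h1, h2⟩ := hrip (indP p S) (by rw [card_filter_indP]; exact hcard)
  rw [sum_sq_indP] at h1 h2
  set k : ℝ := (S.card : ℝ) with hk
  have hk1 : (1:ℝ) ≤ k := by rw [hk]; exact_mod_cast hpos
  set A : ℝ := ∑ r : {x : ZMod p // IsSquare x},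
      ‖∑ i : Option (ZMod p), paleyMatrix p r i * ((indP p S i : ℝ) : ℂ)‖ ^ 2 with hA
  have habs : |A - k| ≤ δ * k := abs_le.mpr ⟨by linarith, by linarith⟩
  have hEq : ((A - k : ℝ) : ℂ) = ((k^2 - k : ℝ) : ℂ) * (gC p / p) := by
    have h4 := L4 hp S hS
    rw [← hA] at h4
    push_cast [hk]
    rw [h4]; ring
  have habs2 : |A - k| = (k^2 - k) * (Real.sqrt p / p) := by
    have := congrArg norm hEq
    rw [Complex.norm_real, Real.norm_eq_abs, norm_mul, Complex.norm_real, Real.norm_eq_abs, norm_div, abs_gC hp,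
      Complex.norm_natCast] at this
    rw [this, abs_of_nonneg (by nlinarith)]
  rw [habs2] at habs
  have hps : Real.sqrt p * Real.sqrt p = p := Real.mul_self_sqrt hppos.le
  have h5 : (k^2 - k) * Real.sqrt p ≤ δ * k * p := by
    have := mul_le_mul_of_nonneg_right habs hppos.le
    calc (k^2 - k) * Real.sqrt p = (k^2 - k) * (Real.sqrt p / p) * p := by field_simp
      _ ≤ δ * k * p := this
  have h6 : (k - 1) * (k * Real.sqrt p) ≤ δ * Real.sqrt p * (k * Real.sqrt p) := by
    nlinarith [h5, hps]
  have := le_of_mul_le_mul_right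
    (by linarith [h6] : (k-1) * (k * Real.sqrt p) ≤ (δ * Real.sqrt p) * (k * Real.sqrt p))
    (by positivity : (0:ℝ) < k * Real.sqrt p)
  linarith

end Aux

theorem paley_RIP_implies_paley_clique_bound (γ τ : ℝ) (hγ : 1 / 2 < γ) (hτ : τ < 1 / 2)
    (h : ∀ ε : ℝ, 0 < ε →
      ∃ p₀ : ℕ, ∀ (p : ℕ) [Fact (Nat.Prime p)], p % 4 = 1 → p₀ ≤ p →
        RIP (paleyMatrix p) ⌊(p : ℝ) ^ γ⌋₊ ((p : ℝ) ^ (τ - 1 / 2 + ε))) :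
    ∀ ε : ℝ, 0 < ε →
      ∃ p₀ : ℕ, ∀ (p : ℕ) [Fact (Nat.Prime p)], p % 4 = 1 → p₀ ≤ p →
        ∀ S : Finset (ZMod p), IsPaleyClique p S → (S.card : ℝ) ≤ (p : ℝ) ^ (τ + ε) := by
  intro ε hε
  obtain ⟨ε', hε'pos, hε'le, hε'bd⟩ : ∃ ε' : ℝ, 0 < ε' ∧ ε' ≤ ε ∧ ε' ≤ 1/2 - τ :=
    ⟨min ε (1/2 - τ), lt_min hε (by linarith), min_le_left _ _, min_le_right _ _⟩
  obtain ⟨α, hαdef⟩ : ∃ α : ℝ, α = τ + ε'/2 := ⟨_, rfl⟩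
  have hαγ : α < γ := by rw [hαdef]; linarith
  obtain ⟨β, hβdef⟩ : ∃ β : ℝ, β = γ - α := ⟨_, rfl⟩
  have hβpos : 0 < β := by rw [hβdef]; linarith
  obtain ⟨p₀', hp₀'⟩ := h (ε'/2) (by linarith)
  have tt : Filter.Tendsto (fun n : ℕ => (n:ℝ)) Filter.atTop Filter.atTop :=
    tendsto_natCast_atTop_atTop
  have t2 : Filter.Tendsto (fun n : ℕ => (n:ℝ)^γ) Filter.atTop Filter.atTop :=
    (tendsto_rpow_atTop (by linarith)).comp tt
  have t3 : Filter.Tendsto (fun n : ℕ => (n:ℝ)^(ε'/2)) Filter.atTop Filter.atTop :=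
    (tendsto_rpow_atTop (by linarith)).comp tt
  have t4 : Filter.Tendsto (fun n : ℕ => (n:ℝ)^β) Filter.atTop Filter.atTop :=
    (tendsto_rpow_atTop hβpos).comp tt
  have hev : ∀ᶠ n : ℕ in Filter.atTop,
      4 ≤ (n:ℝ)^γ ∧ 2 ≤ (n:ℝ)^(ε'/2) ∧ 4 ≤ (n:ℝ)^β ∧ 5 ≤ n :=
    ((t2.eventually_ge_atTop 4).and ((t3.eventually_ge_atTop 2).and
      ((t4.eventually_ge_atTop 4).and (Filter.eventually_ge_atTop 5)))).mono (by tauto)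
  obtain ⟨N, hN⟩ := Filter.eventually_atTop.mp hev
  refine ⟨max p₀' N, ?_⟩
  intro p _ hp4 hp₀ S hS
  obtain ⟨hC5, hC3, hC4, hC1⟩ := hN p (le_trans (le_max_right _ _) hp₀)
  have hp5 : (5:ℝ) ≤ p := by exact_mod_cast hC1
  have hppos : (0:ℝ) < p := by linarith
  have hp1 : (1:ℝ) ≤ p := by linarith
  have hrip := hp₀' p hp4 (le_trans (le_max_left _ _) hp₀)
  have hδ : (0:ℝ) ≤ (p:ℝ)^(τ - 1/2 + ε'/2) := Real.rpow_nonneg hppos.le _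
  have hδs : (p:ℝ)^(τ - 1/2 + ε'/2) * Real.sqrt p = (p:ℝ)^α := by
    rw [Real.sqrt_eq_rpow, ← Real.rpow_add hppos, hαdef]
    congr 1; ring
  have hK2 : 2 ≤ ⌊(p:ℝ)^γ⌋₊ := Nat.le_floor (by norm_num; linarith)
  have hpair : IsPaleyClique p ({0, 1} : Finset (ZMod p)) := by
    intro x hx y hy hxy
    have hm1 : IsSquare (-1 : ZMod p) := ZMod.exists_sq_eq_neg_one_iff.mpr (by omega)
    have h1 : quadraticChar (ZMod p) 1 = 1 :=
      (quadraticChar_one_iff_isSquare one_ne_zero).mpr IsSquare.one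
    have hneg1 : quadraticChar (ZMod p) (-1) = 1 :=
      (quadraticChar_one_iff_isSquare (neg_ne_zero.mpr one_ne_zero)).mpr hm1
    simp only [Finset.mem_insert, Finset.mem_singleton] at hx hy
    rcases hx with rfl | rfl <;> rcases hy with rfl | rfl
    · exact absurd rfl hxy
    · rw [zero_sub]; exact hneg1
    · rw [sub_zero]; exact h1
    · exact absurd rfl hxy
  have hpaircard : ({0, 1} : Finset (ZMod p)).card = 2 := by
    rw [Finset.card_pair]
    exact zero_ne_one
  have h1α : 1 ≤ (p:ℝ)^α := by
    have hk := key_clique_bound hp4 hδ hrip hpair (by rw [hpaircard]; exact hK2)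
    rw [hpaircard, hδs] at hk
    norm_num at hk
    exact hk
  by_cases hle : S.card ≤ ⌊(p:ℝ)^γ⌋₊
  · have hkey := key_clique_bound hp4 hδ hrip hS hle
    rw [hδs] at hkey
    have h3 : 2 * (p:ℝ)^α ≤ (p:ℝ)^(ε'/2) * (p:ℝ)^α :=
      mul_le_mul_of_nonneg_right hC3 (Real.rpow_nonneg hppos.le _)
    have h4 : (p:ℝ)^(ε'/2) * (p:ℝ)^α = (p:ℝ)^(τ+ε') := by
      rw [← Real.rpow_add hppos, hαdef]; congr 1; ring
    have h5 : (p:ℝ)^(τ+ε') ≤ (p:ℝ)^(τ+ε) :=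
      Real.rpow_le_rpow_of_exponent_le hp1 (by linarith)
    linarith
  · exfalso
    push_neg at hle
    obtain ⟨T, hTS, hTcard⟩ := Finset.exists_subset_card_eq hle.le
    have hT : IsPaleyClique p T := fun x hx y hy hxy => hS x (hTS hx) y (hTS hy) hxy
    have hkey := key_clique_bound hp4 hδ hrip hT (le_of_eq hTcard)
    rw [hTcard, hδs] at hkey
    have hfloor : (p:ℝ)^γ - 1 < (⌊(p:ℝ)^γ⌋₊ : ℝ) := Nat.sub_one_lt_floor _
    have hαpos : (0:ℝ) < (p:ℝ)^α := Real.rpow_pos_of_pos hppos _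
    have hsplit : (p:ℝ)^γ = (p:ℝ)^α * (p:ℝ)^β := by
      rw [← Real.rpow_add hppos, hβdef]; congr 1; ring
    have hprod : 4 * (p:ℝ)^α ≤ (p:ℝ)^α * (p:ℝ)^β := by nlinarith [hαpos, hC4]
    linarith
end
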